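/- Let v : 2^[m] → ℝ≥0 be an additive valuation on m goods and let μ be its maximin share with respect to n agents, i.e., μ = max over n-partitions (X_1,…,X_n) of [m] of min_j v(X_j). Consider the duplicated ground set [m] × {1,2} and the additive valuation ṽ defined by ṽ({(g,k)}) = v({g}) for each g ∈ [m] and k ∈ {1,2}. Call a subset S ⊆ [m] × {1,2} feasible if |S ∩ {(g,1),(g,2)}| ≤ 1 for every g ∈ [m], and define the constrained maximin share μ̃ = max over n-partitions (X_1,…,X_n) of [m] × {1,2} in which every part X_j is feasible, of min_j ṽ(X_j). Then μ̃ ≥ 2·μ. -/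
import Mathlib


open Finset

/-- `X : Fin n → Finset α` is a partition of the (finite) ground set `α` into `n`
(possibly empty) pairwise disjoint parts whose union is everything. -/
def IsPartition {α : Type*} [DecidableEq α] [Fintype α] {n : ℕ}
    (X : Fin n → Finset α) : Prop :=
  (∀ i j : Fin n, i ≠ j → Disjoint (X i) (X j)) ∧
    Finset.univ.biUnion X = Finset.univ

/-- A subset of the duplicated ground set `[m] × {1,2}` is feasible if it contains
at most one copy of each good. -/
def Feasible {m : ℕ} (S : Finset (Fin m × Fin 2)) : Prop :=
  ∀ g : Fin m, (S.filter (fun p => p.1 = g)).card ≤ 1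

lemma fin_val_add_one {n : ℕ} [NeZero n] (hn2 : 2 ≤ n) (j : Fin n) :
    (j + 1).val = (j.val + 1) % n := by
  have h1 : ((1 : Fin n)).val = 1 := by
    rw [Fin.val_one']; exact Nat.mod_eq_of_lt (by omega)
  rw [Fin.val_add, h1]

lemma fin_add_one_ne {n : ℕ} [NeZero n] (hn2 : 2 ≤ n) (j : Fin n) : j + 1 ≠ j := by
  intro h
  have hv := congrArg Fin.val h
  rw [fin_val_add_one hn2] at hv
  have hj := j.isLt
  rcases Nat.lt_or_ge (j.val + 1) n with h' | h'
  · rw [Nat.mod_eq_of_lt h'] at hv; omega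
  · have : j.val + 1 = n := by omega
    rw [this, Nat.mod_self] at hv; omega

lemma fin_add_one_inj {n : ℕ} [NeZero n] (hn2 : 2 ≤ n) {i j : Fin n}
    (h : i + 1 = j + 1) : i = j := by
  have hv := congrArg Fin.val h
  rw [fin_val_add_one hn2, fin_val_add_one hn2] at hv
  have hi := i.isLt
  have hj := j.isLt
  have key : ∀ x : ℕ, x < n → (x + 1) % n = if x + 1 < n then x + 1 else 0 := by
    intro x hx
    split
    · exact Nat.mod_eq_of_lt (by omega)
    · have : x + 1 = n := by omega
      rw [this, Nat.mod_self]
  rw [key _ hi, key _ hj] at hv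
  apply Fin.ext
  split at hv <;> split at hv <;> omega

/-- for an additive valuation `v` with maximin share `μ` (over `n`
agents), the maximin share `μ̃` of the duplicated instance on `[m] × {1,2}` —
computed over partitions all of whose parts are feasible, with the duplicated
additive valuation `ṽ(S) = Σ_{(g,k)∈S} v({g})` — satisfies `μ̃ ≥ 2 μ`. -/
theorem duplicated_constrained_mms_ge_two_mms
    (n m : ℕ) (hn : 0 < n) (hm : 0 < m)
    (v : Finset (Fin m) → NNReal)
    (hadd : ∀ S : Finset (Fin m), v S = ∑ g ∈ S, v {g})
    (μ μt : NNReal)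
    (hμ : IsGreatest
      {x : NNReal | ∃ X : Fin n → Finset (Fin m),
        IsPartition X ∧ x = ⨅ j, v (X j)} μ)
    (hμt : IsGreatest
      {x : NNReal | ∃ X : Fin n → Finset (Fin m × Fin 2),
        IsPartition X ∧ (∀ j, Feasible (X j)) ∧
          x = ⨅ j, ∑ p ∈ X j, v {p.1}} μt) :
    2 * μ ≤ μt := by
  rcases Nat.lt_or_ge n 2 with hn1 | hn2
  · -- n = 1 : no feasible partition exists
    have hn1' : n = 1 := by omega
    subst hn1'
    exfalso
    obtain ⟨Xt, hp, hf, -⟩ := hμt.1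
    set g : Fin m := ⟨0, hm⟩
    have hmem : ∀ k : Fin 2, (g, k) ∈ Xt 0 := by
      intro k
      have h : (g, k) ∈ Finset.univ.biUnion Xt := by rw [hp.2]; exact mem_univ _
      rw [mem_biUnion] at h
      obtain ⟨j, -, hj⟩ := h
      have : j = 0 := Subsingleton.elim _ _
      rwa [this] at hj
    have hsub : ({(g, (0:Fin 2)), (g, 1)} : Finset (Fin m × Fin 2)) ⊆
        (Xt 0).filter (fun p => p.1 = g) := by
      intro p hp'
      simp only [mem_insert, mem_singleton] at hp'
      rcases hp' with rfl | rfl <;> simp [hmem]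
    have hcard : ({(g, (0:Fin 2)), (g, 1)} : Finset (Fin m × Fin 2)).card = 2 := by
      rw [card_insert_of_notMem (by simp), card_singleton]
    have := (card_le_card hsub).trans (hf 0 g)
    omega
  · -- main case n ≥ 2
    haveI : NeZero n := ⟨by omega⟩
    haveI : Nonempty (Fin n) := ⟨⟨0, by omega⟩⟩
    obtain ⟨X, hX, hμeq⟩ := hμ.1
    set Y : Fin n → Finset (Fin m × Fin 2) := fun j =>
      (X j).image (fun g => (g, (0:Fin 2))) ∪ (X (j+1)).image (fun g => (g, (1:Fin 2)))
      with hY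
    have hmemY : ∀ (j : Fin n) (p : Fin m × Fin 2),
        p ∈ Y j ↔ (p.2 = 0 ∧ p.1 ∈ X j) ∨ (p.2 = 1 ∧ p.1 ∈ X (j+1)) := by
      intro j p
      simp only [hY, mem_union, mem_image, Prod.ext_iff]
      constructor
      · rintro (⟨a, ha, rfl, h2⟩ | ⟨a, ha, rfl, h2⟩)
        · exact Or.inl ⟨h2.symm, ha⟩
        · exact Or.inr ⟨h2.symm, ha⟩
      · rintro (⟨h2, h1⟩ | ⟨h2, h1⟩)
        · exact Or.inl ⟨p.1, h1, rfl, h2.symm⟩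
        · exact Or.inr ⟨p.1, h1, rfl, h2.symm⟩
    have hfin2 : ∀ k : Fin 2, k = 0 ∨ k = 1 := by decide
    have hpartY : IsPartition Y := by
      constructor
      · intro i j hij
        rw [disjoint_left]
        intro p hpi hpj
        rw [hmemY] at hpi hpj
        rcases hpi with ⟨h2, h1⟩ | ⟨h2, h1⟩ <;> rcases hpj with ⟨h2', h1'⟩ | ⟨h2', h1'⟩
        · exact (disjoint_left.1 (hX.1 i j hij) h1) h1'
        · rw [h2] at h2'; exact absurd h2' (by decide)
        · rw [h2] at h2'; exact absurd h2' (by decide)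
        · have hij' : i + 1 ≠ j + 1 := fun h => hij (fin_add_one_inj hn2 h)
          exact (disjoint_left.1 (hX.1 _ _ hij') h1) h1'
      · ext p
        simp only [mem_biUnion]
        refine ⟨fun _ => mem_univ _, fun _ => ?_⟩
        rcases hfin2 p.2 with h2 | h2
        · have : p.1 ∈ Finset.univ.biUnion X := by rw [hX.2]; exact mem_univ _
          rw [mem_biUnion] at this
          obtain ⟨j, -, hj⟩ := this
          exact ⟨j, mem_univ _, (hmemY j p).2 (Or.inl ⟨h2, hj⟩)⟩
        · have : p.1 ∈ Finset.univ.biUnion X := by rw [hX.2]; exact mem_univ _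
          rw [mem_biUnion] at this
          obtain ⟨j, -, hj⟩ := this
          refine ⟨j - 1, mem_univ _, (hmemY _ p).2 (Or.inr ⟨h2, ?_⟩)⟩
          rwa [sub_add_cancel]
    have hfeasY : ∀ j, Feasible (Y j) := by
      intro j g
      rw [card_le_one]
      intro p hp q hq
      rw [mem_filter] at hp hq
      obtain ⟨hp, hpg⟩ := hp
      obtain ⟨hq, hqg⟩ := hq
      rw [hmemY] at hp hq
      have hne : j ≠ j + 1 := (fin_add_one_ne hn2 j).symm
      have hdisj := disjoint_left.1 (hX.1 j (j+1) hne)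
      rcases hp with ⟨hp2, hp1⟩ | ⟨hp2, hp1⟩ <;> rcases hq with ⟨hq2, hq1⟩ | ⟨hq2, hq1⟩
      · exact Prod.ext (hpg.trans hqg.symm) (hp2.trans hq2.symm)
      · exact absurd (hqg ▸ hq1) (hdisj (hpg ▸ hp1))
      · exact absurd (hpg ▸ hp1) (hdisj (hqg ▸ hq1))
      · exact Prod.ext (hpg.trans hqg.symm) (hp2.trans hq2.symm)
    have hsum : ∀ j, ∑ p ∈ Y j, v {p.1} = v (X j) + v (X (j+1)) := by
      intro j
      have hdisj : Disjoint ((X j).image (fun g => (g, (0:Fin 2))))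
          ((X (j+1)).image (fun g => (g, (1:Fin 2)))) := by
        rw [disjoint_left]
        intro p hp hq
        simp only [mem_image] at hp hq
        obtain ⟨a, -, rfl⟩ := hp
        obtain ⟨b, -, hb⟩ := hq
        exact absurd (congrArg Prod.snd hb) (by simp)
      rw [hY]
      rw [sum_union hdisj,
        sum_image (by intro a _ b _ h; exact (Prod.ext_iff.1 h).1),
        sum_image (by intro a _ b _ h; exact (Prod.ext_iff.1 h).1),
        ← hadd, ← hadd]
    have hμle : ∀ j, μ ≤ v (X j) := by
      intro j
      rw [hμeq]
      exact ciInf_le (OrderBot.bddBelow _) j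
    have hx : (⨅ j, ∑ p ∈ Y j, v {p.1}) ∈
        {x : NNReal | ∃ X : Fin n → Finset (Fin m × Fin 2),
          IsPartition X ∧ (∀ j, Feasible (X j)) ∧
            x = ⨅ j, ∑ p ∈ X j, v {p.1}} := ⟨Y, hpartY, hfeasY, rfl⟩
    refine le_trans ?_ (hμt.2 hx)
    rw [two_mul]
    refine le_ciInf fun j => ?_
    rw [hsum j]
    exact add_le_add (hμle j) (hμle (j+1))
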